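/- Consider the sampled quasi-linear optimization problem P(ω) for a finite subset ω ⊆ Δ. Then the cardinality of any essential set β of P(ω) satisfies |β| ≤ d; equivalently, there exists a subset β ⊆ ω with at most d elements such that Cost(β) = Cost(ω). -/

import Mathlib

open scoped RealInnerProductSpace
open Module

/-- Feasible points of the sampled quasi-linear problem `P(S)`:
`λ ≥ 0`, `x ∈ X`, and `⟪a δ, x⟫ ≤ λ ⟪b δ, x⟫` for all `δ ∈ S`. -/
def QLFeasible {d : ℕ} {Δ : Type*} (X : Set (EuclideanSpace ℝ (Fin d)))
    (a b : Δ → EuclideanSpace ℝ (Fin d)) (S : Set Δ)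
    (lam : ℝ) (x : EuclideanSpace ℝ (Fin d)) : Prop :=
  0 ≤ lam ∧ x ∈ X ∧ ∀ δ ∈ S, ⟪a δ, x⟫ ≤ lam * ⟪b δ, x⟫

/-- The set of attainable values `(λ, c(x))`, ordered lexicographically,
of the sampled quasi-linear problem `P(S)`. `Cost(S)` is the least element
of this set. -/
def QLValues {d : ℕ} {Δ : Type*} (X : Set (EuclideanSpace ℝ (Fin d)))
    (a b : Δ → EuclideanSpace ℝ (Fin d)) (c : EuclideanSpace ℝ (Fin d) → ℝ)
    (S : Set Δ) : Set (ℝ ×ₗ ℝ) :=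
  {p | ∃ lam x, QLFeasible X a b S lam x ∧ p = toLex (lam, c x)}

/-- The radial projection `x ↦ (u / f x) • x` onto the hyperplane `{f = u}` maps
convex subsets of `{f > 0}` to convex sets. -/
lemma convex_proj_image {E : Type*} [NormedAddCommGroup E] [NormedSpace ℝ E]
    (f : E →L[ℝ] ℝ) (u : ℝ) (hu : 0 < u) {S : Set E} (hS : Convex ℝ S)
    (hpos : ∀ x ∈ S, 0 < f x) :
    Convex ℝ ((fun x => (u / f x) • x) '' S) := by
  rintro _ ⟨x1, hx1, rfl⟩ _ ⟨x2, hx2, rfl⟩ s t hs ht hst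
  have hf1 : 0 < f x1 := hpos _ hx1
  have hf2 : 0 < f x2 := hpos _ hx2
  set α : ℝ := s * (u / f x1) with hα
  set β : ℝ := t * (u / f x2) with hβ
  have hα0 : 0 ≤ α := mul_nonneg hs (le_of_lt (div_pos hu hf1))
  have hβ0 : 0 ≤ β := mul_nonneg ht (le_of_lt (div_pos hu hf2))
  have hαβ : 0 < α + β := by
    rcases lt_or_eq_of_le hs with hs' | hs'
    · exact add_pos_of_pos_of_nonneg (mul_pos hs' (div_pos hu hf1)) hβ0
    · have ht' : 0 < t := by linarith
      exact add_pos_of_nonneg_of_pos hα0 (mul_pos ht' (div_pos hu hf2))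
  set θ : ℝ := α / (α + β) with hθ
  have hθ0 : 0 ≤ θ := div_nonneg hα0 hαβ.le
  have hθ1 : 0 ≤ 1 - θ := by
    have : θ ≤ 1 := by
      rw [hθ, div_le_one hαβ]; linarith
    linarith
  set z : E := θ • x1 + (1 - θ) • x2 with hzdef
  have hz : z ∈ S := hS hx1 hx2 hθ0 hθ1 (by ring)
  have e1 : θ * (α + β) = α := by
    rw [hθ]; field_simp
  have e2 : (1 - θ) * (α + β) = β := by linear_combination -e1
  have hαf : α * f x1 = s * u := by rw [hα]; field_simp
  have hβf : β * f x2 = t * u := by rw [hβ]; field_simp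
  have hfz : f z = u / (α + β) := by
    have h1 : f z = θ * f x1 + (1 - θ) * f x2 := by
      simp [hzdef, map_add, map_smul, smul_eq_mul]
    rw [h1, eq_div_iff hαβ.ne']
    linear_combination f x1 * e1 + f x2 * e2 + hαf + hβf + u * hst
  refine ⟨z, hz, ?_⟩
  show (u / f z) • z = s • ((u / f x1) • x1) + t • ((u / f x2) • x2)
  have hfz' : u / f z = α + β := by
    rw [hfz]
    field_simp
  rw [hfz', hzdef, smul_add, smul_smul, smul_smul, mul_comm (α + β) θ,
    mul_comm (α + β) (1 - θ), e1, e2, hα, hβ, mul_smul, mul_smul]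


set_option maxHeartbeats 1600000 in
/-- Theorem 1 (cardinality of essential sets of quasi-linear problems):
there is a subset `β ⊆ ω` with at most `d` elements achieving the same
optimal value as `P(ω)`; in particular every essential set has cardinality
at most `d`. -/
theorem essential_set_card_le {d : ℕ} (hd : 1 ≤ d) {Δ : Type*}
    (X : Set (EuclideanSpace ℝ (Fin d)))
    (hXcompact : IsCompact X) (hXconvex : Convex ℝ X)
    (hXint : (interior X).Nonempty) (hX0 : (0 : EuclideanSpace ℝ (Fin d)) ∉ X)
    (a b : Δ → EuclideanSpace ℝ (Fin d))
    (hb : ∀ δ : Δ, ∀ x ∈ X, 0 < ⟪b δ, x⟫)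
    (c : EuclideanSpace ℝ (Fin d) → ℝ) (m : ℝ) (hm : 0 < m)
    (hc : StrongConvexOn Set.univ m c)
    (ω : Finset Δ) (v : ℝ ×ₗ ℝ)
    (hv : IsLeast (QLValues X a b c (ω : Set Δ)) v) :
    ∃ β : Finset Δ, β ⊆ ω ∧ β.card ≤ d ∧
      IsLeast (QLValues X a b c (β : Set Δ)) v := by
  by_cases hsmall : ω.card ≤ d
  · exact ⟨ω, Finset.Subset.refl ω, hsmall, hv⟩
  push_neg at hsmall
  have hωne : ω.Nonempty := Finset.card_pos.mp (lt_of_le_of_lt (Nat.zero_le d) hsmall)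
  by_contra hno
  push_neg at hno
  -- unpack the optimum
  obtain ⟨⟨lam0, x0, ⟨hlam0, hx0X, hcon0⟩, hveq⟩, hlb⟩ := hv
  -- separation of 0 from X
  obtain ⟨f, u, hu0, hsep⟩ :=
    geometric_hahn_banach_point_closed hXconvex hXcompact.isClosed hX0
  have hu : 0 < u := by simpa using hu0
  have hfpos : ∀ x ∈ X, 0 < f x := fun x hx => hu.trans (hsep x hx)
  -- the radial projection onto the hyperplane {f = u}
  set φ : EuclideanSpace ℝ (Fin d) → EuclideanSpace ℝ (Fin d) := fun x => (u / f x) • x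
    with hφdef
  have hfactor : ∀ x ∈ X, 0 < u / f x := fun x hx => div_pos hu (hfpos x hx)
  have hφf : ∀ x ∈ X, f (φ x) = u := by
    intro x hx
    have : f x ≠ 0 := (hfpos x hx).ne'
    simp [hφdef, map_smul, smul_eq_mul]
    field_simp
  have hφir : ∀ (wv x' : EuclideanSpace ℝ (Fin d)), ⟪wv, φ x'⟫ = (u / f x') * ⟪wv, x'⟫ := by
    intro wv x'
    rw [hφdef]
    exact real_inner_smul_right _ _ _
  -- the shifted constraint vectors
  set w : Δ → EuclideanSpace ℝ (Fin d) := fun δ => a δ - lam0 • b δ with hwdef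
  have hwip : ∀ (δ : Δ) (x : EuclideanSpace ℝ (Fin d)), ⟪w δ, x⟫ = ⟪a δ, x⟫ - lam0 * ⟪b δ, x⟫ := by
    intro δ x
    rw [hwdef]
    simp [inner_sub_left, real_inner_smul_left, Finset.mul_sum, mul_assoc]
  -- convexity of the two projected bodies
  have hXne : X.Nonempty := ⟨hXint.choose, interior_subset hXint.choose_spec⟩
  have hΦconv : Convex ℝ (φ '' X) := convex_proj_image f u hu hXconvex hfpos
  have hsubconv : Convex ℝ (X ∩ {x | c x < c x0}) := by
    have hcc : ConvexOn ℝ Set.univ c := hc.convexOn (by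
      intro r
      have : (0:ℝ) ≤ m / 2 * r ^ 2 := by positivity
      simpa using this)
    have := hcc.convex_lt (c x0)
    simpa using hXconvex.inter (by simpa using this)
  have hΨconv : Convex ℝ (φ '' (X ∩ {x | c x < c x0})) :=
    convex_proj_image f u hu hsubconv (fun x hx => hfpos x hx.1)
  set Φ : Set (EuclideanSpace ℝ (Fin d)) := φ '' X with hΦdef
  set Ψ : Set (EuclideanSpace ℝ (Fin d)) := φ '' (X ∩ {x | c x < c x0}) with hΨdef
  have hΨΦ : Ψ ⊆ Φ := Set.image_mono Set.inter_subset_left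
  -- the Helly family
  set T : Δ → Set (EuclideanSpace ℝ (Fin d)) := fun δ =>
    {y | (y ∈ Φ ∧ ⟪w δ, y⟫ < 0 ∧ 0 < lam0) ∨ (y ∈ Ψ ∧ ⟪w δ, y⟫ ≤ 0)} with hTdef
  have hTconv : ∀ δ, Convex ℝ (T δ) := by
    intro δ
    intro p hp q hq s t hs ht hst
    simp only [hTdef, Set.mem_setOf_eq] at hp hq ⊢
    have hwcomb : ⟪w δ, s • p + t • q⟫ = s * ⟪w δ, p⟫ + t * ⟪w δ, q⟫ := by
      rw [inner_add_right, real_inner_smul_right, real_inner_smul_right]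
    rcases hp with ⟨hpΦ, hpw, hpl⟩ | ⟨hpΨ, hpw⟩
    · rcases hq with ⟨hqΦ, hqw, _⟩ | ⟨hqΨ, hqw⟩
      · left
        refine ⟨hΦconv hpΦ hqΦ hs ht hst, ?_, hpl⟩
        rw [hwcomb]
        have h1 : s * ⟪w δ, p⟫ ≤ 0 := mul_nonpos_iff.mpr (Or.inl ⟨hs, hpw.le⟩)
        have h2 : t * ⟪w δ, q⟫ ≤ 0 := mul_nonpos_iff.mpr (Or.inl ⟨ht, hqw.le⟩)
        rcases lt_or_ge 0 s with hs' | hs'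
        · exact add_neg_of_neg_of_nonpos (mul_neg_of_pos_of_neg hs' hpw) h2
        · have ht' : 0 < t := by linarith
          exact add_neg_of_nonpos_of_neg h1 (mul_neg_of_pos_of_neg ht' hqw)
      · -- p of the first kind, q of the second kind
        rcases eq_or_lt_of_le hs with hs0 | hs0
        · have ht1 : t = 1 := by linarith
          rw [← hs0, ht1, zero_smul, zero_add, one_smul]
          right
          exact ⟨hqΨ, hqw⟩
        · left
          refine ⟨hΦconv hpΦ (hΨΦ hqΨ) hs ht hst, ?_, hpl⟩
          rw [hwcomb]
          have h2 : t * ⟪w δ, q⟫ ≤ 0 := mul_nonpos_iff.mpr (Or.inl ⟨ht, hqw⟩)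
          exact add_neg_of_neg_of_nonpos (mul_neg_of_pos_of_neg hs0 hpw) h2
    · rcases hq with ⟨hqΦ, hqw, hql⟩ | ⟨hqΨ, hqw⟩
      · rcases eq_or_lt_of_le ht with ht0 | ht0
        · have hs1 : s = 1 := by linarith
          rw [← ht0, hs1, zero_smul, add_zero, one_smul]
          right
          exact ⟨hpΨ, hpw⟩
        · left
          refine ⟨hΦconv (hΨΦ hpΨ) hqΦ hs ht hst, ?_, hql⟩
          rw [hwcomb]
          have h1 : s * ⟪w δ, p⟫ ≤ 0 := mul_nonpos_iff.mpr (Or.inl ⟨hs, hpw⟩)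
          exact add_neg_of_nonpos_of_neg h1 (mul_neg_of_pos_of_neg ht0 hqw)
      · right
        refine ⟨hΨconv hpΨ hqΨ hs ht hst, ?_⟩
        rw [hwcomb]
        have h1 : s * ⟪w δ, p⟫ ≤ 0 := mul_nonpos_iff.mpr (Or.inl ⟨hs, hpw⟩)
        have h2 : t * ⟪w δ, q⟫ ≤ 0 := mul_nonpos_iff.mpr (Or.inl ⟨ht, hqw⟩)
        linarith
  -- the hyperplane as a submodule
  set g : EuclideanSpace ℝ (Fin d) →ₗ[ℝ] ℝ := (f : EuclideanSpace ℝ (Fin d) →ₗ[ℝ] ℝ)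
    with hgdef
  set V : Submodule ℝ (EuclideanSpace ℝ (Fin d)) := LinearMap.ker g with hVdef
  have hgf : ∀ x : EuclideanSpace ℝ (Fin d), g x = f x := fun _ => rfl
  have hVrank : finrank ℝ V + 1 = d := by
    have hx0ne : f x0 ≠ 0 := (hfpos x0 hx0X).ne'
    have hsurj : Function.Surjective g := by
      intro r
      refine ⟨(r / f x0) • x0, ?_⟩
      rw [map_smul, smul_eq_mul, hgf]
      field_simp
    have hrange : LinearMap.range g = ⊤ := LinearMap.range_eq_top.mpr hsurj
    have h1 := LinearMap.finrank_range_add_finrank_ker g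
    rw [hrange, finrank_top, finrank_self] at h1
    have hE : finrank ℝ (EuclideanSpace ℝ (Fin d)) = d := finrank_euclideanSpace_fin
    rw [hVdef]
    omega
  set p0 : EuclideanSpace ℝ (Fin d) := φ x0 with hp0def
  have hp0 : f p0 = u := hφf x0 hx0X
  -- transferred family on V
  set A : V →ᵃ[ℝ] EuclideanSpace ℝ (Fin d) :=
    (AffineEquiv.constVAdd ℝ (EuclideanSpace ℝ (Fin d)) p0).toAffineMap.comp V.subtype.toAffineMap
      with hAdef
  have hAapp : ∀ z : V, A z = p0 + (z : EuclideanSpace ℝ (Fin d)) := by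
    intro z; rfl
  set F : Δ → Set V := fun δ => A ⁻¹' (T δ) with hFdef
  -- improvements exist for every small subfamily
  have himp : ∀ I : Finset Δ, I ⊆ ω → I.card ≤ d →
      ∃ x ∈ X, (∀ δ ∈ I, ⟪w δ, x⟫ ≤ 0) ∧
        ((∀ δ ∈ I, ⟪w δ, x⟫ < 0) ∧ 0 < lam0 ∨ c x < c x0) := by
    intro I hIω hIcard
    have hvmem : v ∈ QLValues X a b c (I : Set Δ) := by
      exact ⟨lam0, x0, ⟨hlam0, hx0X,
        fun δ hδ => hcon0 δ (Finset.mem_coe.mpr (hIω (Finset.mem_coe.mp hδ)))⟩, hveq⟩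
    have hnl := hno I hIω hIcard
    rw [IsLeast] at hnl
    push_neg at hnl
    have hnlb := hnl hvmem
    rw [lowerBounds, Set.mem_setOf_eq] at hnlb
    push_neg at hnlb
    obtain ⟨p, hpmem, hplt⟩ := hnlb
    obtain ⟨lam, x, ⟨hlam, hxX, hcon⟩, rfl⟩ := hpmem
    rw [hveq, Prod.Lex.lt_iff] at hplt
    simp only [ofLex_toLex] at hplt
    have hll : lam ≤ lam0 := by
      rcases hplt with h | ⟨h, _⟩
      · exact h.le
      · exact h.le
    refine ⟨x, hxX, ?_, ?_⟩
    · intro δ hδ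
      rw [hwip]
      have h2 := hcon δ (Finset.mem_coe.mpr hδ)
      have h3 := hb δ x hxX
      have h4 : (0:ℝ) ≤ (lam0 - lam) * ⟪b δ, x⟫ :=
        mul_nonneg (by linarith) h3.le
      linarith [h4, mul_comm lam0 (⟪b δ, x⟫:ℝ)]
    · rcases hplt with h | ⟨_, h⟩
      · left
        refine ⟨?_, lt_of_le_of_lt hlam h⟩
        intro δ hδ
        rw [hwip]
        have h2 := hcon δ (Finset.mem_coe.mpr hδ)
        have h3 := hb δ x hxX
        have h4 : (0:ℝ) < (lam0 - lam) * ⟪b δ, x⟫ :=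
          mul_pos (by linarith) h3
        linarith [h4, mul_comm lam0 (⟪b δ, x⟫:ℝ)]
      · right
        exact h
  -- Helly's theorem in V
  have hhelly : (⋂ δ ∈ ω, F δ).Nonempty := by
    apply Convex.helly_theorem' (𝕜 := ℝ)
    · intro δ _
      exact (hTconv δ).affine_preimage A
    · intro I hIω hIcard
      rw [hVrank] at hIcard
      obtain ⟨x, hxX, hxle, hxalt⟩ := himp I hIω hIcard
      have hyT : ∀ δ ∈ I, φ x ∈ T δ := by
        intro δ hδ
        have hfac := hfactor x hxX
        simp only [hTdef, Set.mem_setOf_eq]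
        rcases hxalt with ⟨hstr, hl0⟩ | hcx
        · left
          exact ⟨Set.mem_image_of_mem φ hxX,
            by rw [hφir]; exact mul_neg_of_pos_of_neg hfac (hstr δ hδ), hl0⟩
        · right
          exact ⟨Set.mem_image_of_mem φ ⟨hxX, hcx⟩,
            by rw [hφir]; exact mul_nonpos_iff.mpr (Or.inl ⟨hfac.le, hxle δ hδ⟩)⟩
      have hfy : f (φ x) = u := hφf x hxX
      refine ⟨⟨φ x - p0, ?_⟩, ?_⟩
      · rw [LinearMap.mem_ker, map_sub, hgf, hgf, hfy, hp0, sub_self]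
      · simp only [Set.mem_iInter]
        intro δ hδ
        simp only [hFdef, Set.mem_preimage, hAapp]
        rw [add_sub_cancel]
        exact hyT δ hδ
  obtain ⟨z, hz⟩ := hhelly
  simp only [Set.mem_iInter] at hz
  set y : EuclideanSpace ℝ (Fin d) := p0 + (z : EuclideanSpace ℝ (Fin d)) with hydef
  have hyT : ∀ δ ∈ ω, y ∈ T δ := by
    intro δ hδ
    have := hz δ hδ
    rwa [hFdef, Set.mem_preimage, hAapp] at this
  -- final contradiction
  by_cases hΨy : y ∈ Ψ
  · -- all constraints hold at lam0 with strictly better cost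
    obtain ⟨x, ⟨hxX, hcx⟩, hxy⟩ := hΨy
    have hxcon : ∀ δ ∈ ω, ⟪w δ, x⟫ ≤ 0 := by
      intro δ hδ
      have h1 : ⟪w δ, y⟫ ≤ 0 := by
        rcases hyT δ hδ with h | h
        · exact h.2.1.le
        · exact h.2
      rw [← hxy, hφir] at h1
      have hfac := hfactor x hxX
      rcases mul_nonpos_iff.mp h1 with ⟨_, h3⟩ | ⟨h2, _⟩
      · exact h3
      · linarith
    have hmem : toLex (lam0, c x) ∈ QLValues X a b c (ω : Set Δ) := by
      refine ⟨lam0, x, ⟨hlam0, hxX, ?_⟩, rfl⟩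
      intro δ hδ
      have := hxcon δ (by simpa using hδ)
      rw [hwip] at this
      linarith
    have hle := hlb hmem
    rw [hveq, Prod.Lex.le_iff] at hle
    rcases hle with h | ⟨_, h⟩
    · exact absurd h (lt_irrefl _)
    · exact absurd hcx (not_lt.mpr h)
  · -- all memberships are of the first kind : strictly feasible below lam0
    have hyA : ∀ δ ∈ ω, y ∈ Φ ∧ ⟪w δ, y⟫ < 0 ∧ 0 < lam0 := by
      intro δ hδ
      rcases hyT δ hδ with h | h
      · exact h
      · exact absurd h.1 hΨy
    obtain ⟨δ1, hδ1⟩ := hωne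
    obtain ⟨hyΦ, _, hlam0pos⟩ := hyA δ1 hδ1
    obtain ⟨x, hxX, hxy⟩ := hyΦ
    have hxstrict : ∀ δ ∈ ω, ⟪w δ, x⟫ < 0 := by
      intro δ hδ
      have h1 : ⟪w δ, y⟫ < 0 := (hyA δ hδ).2.1
      rw [← hxy, hφir] at h1
      have hfac := hfactor x hxX
      rcases mul_neg_iff.mp h1 with ⟨_, h3⟩ | ⟨h2, _⟩
      · exact h3
      · linarith
    -- build a strictly smaller feasible lambda
    set R : Finset ℝ := ω.image (fun δ => ⟪a δ, x⟫ / ⟪b δ, x⟫) with hRdef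
    have hRne : R.Nonempty := ⟨_, Finset.mem_image_of_mem _ hδ1⟩
    set lam : ℝ := max (R.max' hRne) 0 with hlamdef
    have hlamlt : lam < lam0 := by
      rw [hlamdef, max_lt_iff]
      constructor
      · rw [Finset.max'_lt_iff]
        intro r hr
        rw [hRdef] at hr
        obtain ⟨δ, hδ, rfl⟩ := Finset.mem_image.mp hr
        rw [div_lt_iff₀ (hb δ x hxX)]
        have := hxstrict δ hδ
        rw [hwip] at this
        linarith
      · exact hlam0pos
    have hmem : toLex (lam, c x) ∈ QLValues X a b c (ω : Set Δ) := by
      refine ⟨lam, x, ⟨le_max_right _ _, hxX, ?_⟩, rfl⟩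
      intro δ hδ
      have h1 : ⟪a δ, x⟫ / ⟪b δ, x⟫ ≤ lam :=
        le_trans (Finset.le_max' R _ (Finset.mem_image_of_mem _ (by simpa using hδ)))
          (le_max_left _ _)
      rw [div_le_iff₀ (hb δ x hxX)] at h1
      linarith [h1]
    have hle := hlb hmem
    rw [hveq, Prod.Lex.le_iff] at hle
    rcases hle with h | ⟨h, _⟩
    · exact absurd h (not_lt.mpr hlamlt.le)
    · exact absurd h (ne_of_gt hlamlt)
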